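/- Let X, V be n×k matrices and S a symmetric k×k matrix. If V' = V + X S, then V' X^T - X (V')^T = V X^T - X V^T. Consequently, if V solves the Cayley equation (I + (1/2)(V X^T - X V^T)) X = (I - (1/2)(V X^T - X V^T)) Y, then so does V' = V + X S. -/
import Mathlib

open Matrix

theorem stmt4 {n k : ℕ} (X V Y : Matrix (Fin n) (Fin k) ℝ)
    (S : Matrix (Fin k) (Fin k) ℝ) (hS : Sᵀ = S)
    (V' : Matrix (Fin n) (Fin k) ℝ) (hV' : V' = V + X * S) :
    V' * Xᵀ - X * V'ᵀ = V * Xᵀ - X * Vᵀ ∧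
      ((1 + (1 / 2 : ℝ) • (V * Xᵀ - X * Vᵀ)) * X
          = (1 - (1 / 2 : ℝ) • (V * Xᵀ - X * Vᵀ)) * Y →
        (1 + (1 / 2 : ℝ) • (V' * Xᵀ - X * V'ᵀ)) * X
          = (1 - (1 / 2 : ℝ) • (V' * Xᵀ - X * V'ᵀ)) * Y) := by
  have key : V' * Xᵀ - X * V'ᵀ = V * Xᵀ - X * Vᵀ := by
    subst hV'
    rw [transpose_add, transpose_mul, hS, Matrix.add_mul, Matrix.mul_add, Matrix.mul_assoc]
    abel
  exact ⟨key, fun h => by rw [key]; exact h⟩
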